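/- Let q = 2^(2e+1) with e ≥ 1, σ = 2^(e+1), and z_2 ∈ F_q nonzero. Then the set of solutions (s,t) ∈ F_q × F_q of s^(σ+2) + t^σ + st + z_2 = 0 equals {( z_2^(1-σ/2) u^σ / (1 + u + u^σ), z_2^(σ/2)(1 + u^σ)/(1 + u + u^σ) ) : u ∈ F_q} ∪ {( z_2^(1-σ/2), z_2^(σ/2) )}, where σ/2 = 2^e. In particular the equation has exactly q + 1 solutions. -/

import Mathlib

set_option maxHeartbeats 2000000 in
/-- For `q = 2^(2e+1)`, `σ = 2^(e+1)`, `z₂ ∈ F_q` nonzero: the solution set of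
`s^(σ+2) + t^σ + st + z₂ = 0` is the stated parameterized set, and has exactly
`q + 1` elements. -/
theorem stmt_15 (e : ℕ) (he : 1 ≤ e) (F : Type*) [Field F] [Fintype F]
    (hF : Fintype.card F = 2 ^ (2 * e + 1)) (z₂ : F) (hz₂ : z₂ ≠ 0) :
    {p : F × F |
        p.1 ^ (2 ^ (e + 1) + 2) + p.2 ^ (2 ^ (e + 1)) + p.1 * p.2 + z₂ = 0} =
      (Set.range fun u : F =>
        ((z₂ * (z₂ ^ (2 ^ e))⁻¹ * u ^ (2 ^ (e + 1))) /
            (1 + u + u ^ (2 ^ (e + 1))),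
         (z₂ ^ (2 ^ e) * (1 + u ^ (2 ^ (e + 1)))) /
            (1 + u + u ^ (2 ^ (e + 1))))) ∪
        {(z₂ * (z₂ ^ (2 ^ e))⁻¹, z₂ ^ (2 ^ e))} ∧
    {p : F × F |
        p.1 ^ (2 ^ (e + 1) + 2) + p.2 ^ (2 ^ (e + 1)) + p.1 * p.2 + z₂
          = 0}.ncard = 2 ^ (2 * e + 1) + 1 := by
  -- characteristic 2
  have hchar : CharP F 2 := by
    obtain ⟨n, hp, hcard⟩ := FiniteField.card F (ringChar F)
    have h2 : ringChar F = 2 := by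
      have hdvd : ringChar F ∣ 2 ^ (2 * e + 1) := by
        rw [← hF, hcard]
        exact dvd_pow_self _ (by exact_mod_cast n.ne_zero)
      exact (Nat.prime_dvd_prime_iff_eq hp Nat.prime_two).mp (hp.dvd_of_dvd_pow hdvd)
    exact h2 ▸ ringChar.charP F
  haveI := hchar
  haveI : Fact (Nat.Prime 2) := ⟨Nat.prime_two⟩
  have h2 : (2 : F) = 0 := by exact_mod_cast CharP.cast_eq_zero F 2
  -- Frobenius facts
  have hqe : 2 ^ e * 2 ^ (e + 1) = 2 ^ (2 * e + 1) := by rw [← pow_add]; congr 1; ring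
  have hA : ∀ x : F, (x ^ 2 ^ e) ^ 2 ^ (e + 1) = x := fun x => by
    rw [← pow_mul, hqe, ← hF, FiniteField.pow_card]
  have hA' : ∀ x : F, (x ^ 2 ^ (e + 1)) ^ 2 ^ e = x := fun x => by
    rw [← pow_mul, mul_comm, hqe, ← hF, FiniteField.pow_card]
  have hinj : ∀ x y : F, x ^ 2 ^ (e + 1) = y ^ 2 ^ (e + 1) → x = y := fun x y h => by
    have h' := congrArg (· ^ 2 ^ e) h
    simpa [hA'] using h'
  have hB : ∀ x : F, (x ^ 2 ^ (e + 1)) ^ 2 ^ (e + 1) = x ^ 2 := fun x => by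
    rw [← pow_mul]
    have hh : 2 ^ (e + 1) * 2 ^ (e + 1) = 2 ^ (2 * e + 1) * 2 := by
      rw [← pow_add, ← pow_succ]; congr 1; ring
    rw [hh, pow_mul, ← hF, FiniteField.pow_card]
  have hadd : ∀ x y : F, (x + y) ^ 2 ^ (e + 1) = x ^ 2 ^ (e + 1) + y ^ 2 ^ (e + 1) :=
    fun x y => add_pow_char_pow x y 2 (e + 1)
  have hDne : ∀ u : F, 1 + u + u ^ 2 ^ (e + 1) ≠ 0 := by
    intro u hu
    have hv : u ^ 2 ^ (e + 1) = 1 + u := by linear_combination hu - (1 + u) * h2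
    have hsq : u ^ 2 = u := by
      have hb := hB u
      rw [hv, hadd 1 u, one_pow, hv] at hb
      linear_combination -hb + h2
    have h01 : u = 0 ∨ u = 1 := by
      have hf : u * (u - 1) = 0 := by linear_combination hsq
      rcases mul_eq_zero.mp hf with h | h
      · exact Or.inl h
      · exact Or.inr (by linear_combination h)
    rcases h01 with h | h
    · rw [h] at hu; simp at hu
    · rw [h, one_pow] at hu
      exact one_ne_zero (by linear_combination hu - h2 : (1 : F) = 0)
  -- abbreviations
  have hbne : z₂ ^ 2 ^ e ≠ 0 := pow_ne_zero _ hz₂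
  have hane : z₂ * (z₂ ^ 2 ^ e)⁻¹ ≠ 0 := mul_ne_zero hz₂ (inv_ne_zero hbne)
  have hbσ : (z₂ ^ 2 ^ e) ^ 2 ^ (e + 1) = z₂ := hA z₂
  have hzσ : z₂ ^ 2 ^ (e + 1) = z₂ ^ 2 ^ e * z₂ ^ 2 ^ e := by
    rw [← pow_add]; congr 1; rw [pow_succ]; ring
  -- the special point is a solution
  have hsolP : (z₂ * (z₂ ^ 2 ^ e)⁻¹) ^ (2 ^ (e + 1) + 2) + (z₂ ^ 2 ^ e) ^ 2 ^ (e + 1)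
      + (z₂ * (z₂ ^ 2 ^ e)⁻¹) * (z₂ ^ 2 ^ e) + z₂ = 0 := by
    rw [pow_add, mul_pow, inv_pow, hbσ, hzσ]
    field_simp
    linear_combination 2 * z₂ * h2
  -- every point of the range is a solution
  have hsolR : ∀ u : F,
      ((z₂ * (z₂ ^ 2 ^ e)⁻¹ * u ^ 2 ^ (e + 1)) / (1 + u + u ^ 2 ^ (e + 1))) ^ (2 ^ (e + 1) + 2)
      + ((z₂ ^ 2 ^ e * (1 + u ^ 2 ^ (e + 1))) / (1 + u + u ^ 2 ^ (e + 1))) ^ 2 ^ (e + 1)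
      + ((z₂ * (z₂ ^ 2 ^ e)⁻¹ * u ^ 2 ^ (e + 1)) / (1 + u + u ^ 2 ^ (e + 1)))
        * ((z₂ ^ 2 ^ e * (1 + u ^ 2 ^ (e + 1))) / (1 + u + u ^ 2 ^ (e + 1)))
      + z₂ = 0 := by
    intro u
    have hD := hDne u
    have hvσ : (u ^ 2 ^ (e + 1)) ^ 2 ^ (e + 1) = u ^ 2 := hB u
    have hDσ : (1 + u + u ^ 2 ^ (e + 1)) ^ 2 ^ (e + 1) = 1 + u ^ 2 ^ (e + 1) + u ^ 2 := by
      rw [hadd, hadd, one_pow, hvσ]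
    have hEne : (1 + u ^ 2 ^ (e + 1) + u ^ 2 : F) ≠ 0 := hDσ ▸ pow_ne_zero _ hD
    have e1 : (z₂ * (z₂ ^ 2 ^ e)⁻¹ * u ^ 2 ^ (e + 1)) ^ 2 ^ (e + 1)
        = z₂ ^ 2 ^ e * z₂ ^ 2 ^ e * z₂⁻¹ * u ^ 2 := by
      rw [mul_pow, mul_pow, inv_pow, hbσ, hvσ, hzσ]
    have e2 : (z₂ ^ 2 ^ e * (1 + u ^ 2 ^ (e + 1))) ^ 2 ^ (e + 1) = z₂ * (1 + u ^ 2) := by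
      rw [mul_pow, hbσ, hadd, one_pow, hvσ]
    rw [pow_add]
    simp only [div_pow]
    rw [e1, e2, hDσ]
    field_simp [hD, hEne, hz₂, hbne]
    linear_combination z₂ * ((1)*u^0*(u ^ 2 ^ (e + 1))^0 + (3)*u^0*(u ^ 2 ^ (e + 1))^1 + (3)*u^0*(u ^ 2 ^ (e + 1))^2 + (1)*u^0*(u ^ 2 ^ (e + 1))^3 + (2)*u^1*(u ^ 2 ^ (e + 1))^0 + (3)*u^1*(u ^ 2 ^ (e + 1))^1 + (1)*u^1*(u ^ 2 ^ (e + 1))^2 + (2)*u^2*(u ^ 2 ^ (e + 1))^0 + (3)*u^2*(u ^ 2 ^ (e + 1))^1 + (2)*u^2*(u ^ 2 ^ (e + 1))^2 + (2)*u^3*(u ^ 2 ^ (e + 1))^0 + (2)*u^3*(u ^ 2 ^ (e + 1))^1 + (1)*u^4*(u ^ 2 ^ (e + 1))^0) * h2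
  -- surjectivity
  have hsurj : ∀ s t : F,
      s ^ (2 ^ (e + 1) + 2) + t ^ 2 ^ (e + 1) + s * t + z₂ = 0 →
      ¬(s = z₂ * (z₂ ^ 2 ^ e)⁻¹ ∧ t = z₂ ^ 2 ^ e) →
      ∃ u : F,
        ((z₂ * (z₂ ^ 2 ^ e)⁻¹ * u ^ 2 ^ (e + 1)) / (1 + u + u ^ 2 ^ (e + 1)),
         (z₂ ^ 2 ^ e * (1 + u ^ 2 ^ (e + 1))) / (1 + u + u ^ 2 ^ (e + 1))) = (s, t) := by
    intro s t hp hne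
    obtain ⟨x, rfl⟩ : ∃ x, s = z₂ * (z₂ ^ 2 ^ e)⁻¹ * x :=
      ⟨(z₂ * (z₂ ^ 2 ^ e)⁻¹)⁻¹ * s, by rw [← mul_assoc, mul_inv_cancel₀ hane, one_mul]⟩
    obtain ⟨y, rfl⟩ : ∃ y, t = z₂ ^ 2 ^ e * y :=
      ⟨(z₂ ^ 2 ^ e)⁻¹ * t, by rw [← mul_assoc, mul_inv_cancel₀ hbne, one_mul]⟩
    have hexp : (z₂ * (z₂ ^ 2 ^ e)⁻¹ * x) ^ (2 ^ (e + 1) + 2) + (z₂ ^ 2 ^ e * y) ^ 2 ^ (e + 1)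
        + (z₂ * (z₂ ^ 2 ^ e)⁻¹ * x) * (z₂ ^ 2 ^ e * y) + z₂
        = z₂ * (x ^ 2 ^ (e + 1) * x ^ 2 + y ^ 2 ^ (e + 1) + x * y + 1) := by
      rw [pow_add]
      simp only [mul_pow, inv_pow]
      rw [hbσ, hzσ]
      field_simp
    rw [hexp] at hp
    have h1 : x ^ 2 ^ (e + 1) * x ^ 2 + y ^ 2 ^ (e + 1) + x * y + 1 = 0 :=
      (mul_eq_zero.mp hp).resolve_left hz₂
    have hz0 : (0 : F) ^ 2 ^ (e + 1) = 0 := zero_pow (pow_ne_zero _ (by norm_num))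
    have hσ : x ^ 2 * (x ^ 2 ^ (e + 1)) ^ 2 + y ^ 2 + x ^ 2 ^ (e + 1) * y ^ 2 ^ (e + 1) + 1
        = 0 := by
      have h0 := congrArg (· ^ 2 ^ (e + 1)) h1
      simp only [hadd, mul_pow, one_pow] at h0
      rw [hB, hB, pow_right_comm x 2, hz0] at h0
      linear_combination h0
    have hxyne : x + y ≠ 0 := by
      intro h0
      have hyx : y = x := by linear_combination h0 - x * h2
      rw [hyx] at h1
      have hfac : (x ^ 2 + 1) * (x ^ 2 ^ (e + 1) + 1) = 0 := by linear_combination h1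
      have hx1 : x = 1 := by
        rcases mul_eq_zero.mp hfac with h | h
        · have hsq : (x - 1) ^ 2 = 0 := by linear_combination h - x * h2
          have hx0 := (pow_eq_zero_iff (two_ne_zero)).mp hsq
          linear_combination hx0
        · refine hinj x 1 ?_
          rw [one_pow]; linear_combination h - h2
      exact hne ⟨by rw [hx1, mul_one], by rw [hyx, hx1, mul_one]⟩
    have hkey : x ^ 2 ^ (e + 1) * x + y ^ 2 ^ (e + 1) * y + x + y = 0 := by
      linear_combination (y + x * x ^ 2 ^ (e + 1)) * h1 + x * hσ
        - (x * x ^ 2 ^ (e + 1) * y ^ 2 ^ (e + 1) + x * y ^ 2 + x ^ 2 * y * x ^ 2 ^ (e + 1)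
          + x ^ 3 * (x ^ 2 ^ (e + 1)) ^ 2) * h2
    have hXYne : x ^ 2 ^ (e + 1) + y ^ 2 ^ (e + 1) ≠ 0 := by
      rw [← hadd]; exact pow_ne_zero _ hxyne
    refine ⟨(x * (x + y)⁻¹) ^ 2 ^ e, ?_⟩
    have huσ : ((x * (x + y)⁻¹) ^ 2 ^ e) ^ 2 ^ (e + 1) = x * (x + y)⁻¹ := hA _
    have huval : (x * (x + y)⁻¹) ^ 2 ^ e = (y + 1) * (x + y)⁻¹ := by
      refine hinj _ _ ?_
      rw [huσ, mul_pow, inv_pow, hadd, hadd, one_pow]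
      field_simp
      linear_combination hkey - (y ^ 2 ^ (e + 1) * y + x + y) * h2
    have hDval : 1 + (x * (x + y)⁻¹) ^ 2 ^ e + ((x * (x + y)⁻¹) ^ 2 ^ e) ^ 2 ^ (e + 1)
        = (x + y)⁻¹ := by
      rw [huσ, huval]
      field_simp
      linear_combination (x + y) * h2
    rw [hDval, huσ, Prod.mk.injEq]
    constructor
    · field_simp
    · field_simp
      linear_combination x * h2
  -- the special point is not in the range
  have hnotmem : (z₂ * (z₂ ^ 2 ^ e)⁻¹, z₂ ^ 2 ^ e) ∉ Set.range fun u : F =>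
      ((z₂ * (z₂ ^ 2 ^ e)⁻¹ * u ^ 2 ^ (e + 1)) / (1 + u + u ^ 2 ^ (e + 1)),
       (z₂ ^ 2 ^ e * (1 + u ^ 2 ^ (e + 1))) / (1 + u + u ^ 2 ^ (e + 1))) := by
    rintro ⟨u, hu⟩
    rw [Prod.mk.injEq] at hu
    obtain ⟨hu1, hu2⟩ := hu
    rw [div_eq_iff (hDne u)] at hu2
    have h' : (1 : F) + u ^ 2 ^ (e + 1) = 1 + u + u ^ 2 ^ (e + 1) :=
      mul_left_cancel₀ hbne (by linear_combination hu2)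
    have hu0 : u = 0 := by linear_combination -h'
    rw [hu0, zero_pow (pow_ne_zero _ (by norm_num : (2 : ℕ) ≠ 0)), mul_zero, zero_div] at hu1
    exact hane hu1.symm
  -- the parameterization is injective
  have hfinj : Function.Injective fun u : F =>
      ((z₂ * (z₂ ^ 2 ^ e)⁻¹ * u ^ 2 ^ (e + 1)) / (1 + u + u ^ 2 ^ (e + 1)),
       (z₂ ^ 2 ^ e * (1 + u ^ 2 ^ (e + 1))) / (1 + u + u ^ 2 ^ (e + 1))) := by
    intro u u' h
    rw [Prod.mk.injEq] at h
    obtain ⟨h1c, h2c⟩ := h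
    rw [div_eq_div_iff (hDne u) (hDne u')] at h1c h2c
    have e1 : u ^ 2 ^ (e + 1) * (1 + u' + u' ^ 2 ^ (e + 1))
        = u' ^ 2 ^ (e + 1) * (1 + u + u ^ 2 ^ (e + 1)) :=
      mul_left_cancel₀ hane (by linear_combination h1c)
    have e2 : (1 + u ^ 2 ^ (e + 1)) * (1 + u' + u' ^ 2 ^ (e + 1))
        = (1 + u' ^ 2 ^ (e + 1)) * (1 + u + u ^ 2 ^ (e + 1)) :=
      mul_left_cancel₀ hbne (by linear_combination h2c)
    have eD : 1 + u + u ^ 2 ^ (e + 1) = 1 + u' + u' ^ 2 ^ (e + 1) := by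
      linear_combination e1 - e2
    have ev : u ^ 2 ^ (e + 1) = u' ^ 2 ^ (e + 1) := by
      rw [eD] at e1
      exact mul_right_cancel₀ (hDne u') e1
    exact hinj _ _ ev
  -- the set equality
  have hSet : {p : F × F |
        p.1 ^ (2 ^ (e + 1) + 2) + p.2 ^ (2 ^ (e + 1)) + p.1 * p.2 + z₂ = 0} =
      (Set.range fun u : F =>
        ((z₂ * (z₂ ^ (2 ^ e))⁻¹ * u ^ (2 ^ (e + 1))) /
            (1 + u + u ^ (2 ^ (e + 1))),
         (z₂ ^ (2 ^ e) * (1 + u ^ (2 ^ (e + 1)))) /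
            (1 + u + u ^ (2 ^ (e + 1))))) ∪
        {(z₂ * (z₂ ^ (2 ^ e))⁻¹, z₂ ^ (2 ^ e))} := by
    ext ⟨s, t⟩
    simp only [Set.mem_setOf_eq, Set.mem_union, Set.mem_range, Set.mem_singleton_iff]
    constructor
    · intro hp
      by_cases hc : s = z₂ * (z₂ ^ 2 ^ e)⁻¹ ∧ t = z₂ ^ 2 ^ e
      · right; rw [hc.1, hc.2]
      · left; exact hsurj s t hp hc
    · rintro (⟨u, hu⟩ | hp)
      · have hu1 := congrArg Prod.fst hu
        have hu2 := congrArg Prod.snd hu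
        simp only at hu1 hu2
        rw [← hu1, ← hu2]
        exact hsolR u
      · rw [Prod.mk.injEq] at hp
        rw [hp.1, hp.2]
        exact hsolP
  refine ⟨hSet, ?_⟩
  rw [hSet, Set.union_singleton,
    Set.ncard_insert_of_notMem hnotmem (Set.finite_range _),
    ← Set.image_univ, Set.ncard_image_of_injective _ hfinj, Set.ncard_univ,
    Nat.card_eq_fintype_card, hF]
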